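/- Value error bound for MDPs: Let P₁ and P₂ be row-stochastic matrices, R a vector, γ ∈ [0,1), and define V₁ = (I - γP₁)^{-1}R and V₂ = (I - γP₂)^{-1}R. Then ‖V₁ - V₂‖_∞ ≤ (γ/(1-γ)²)·‖R‖_∞·‖P₁ - P₂‖_∞. -/

import Mathlib

private lemma stoch_mulVec_abs_le {n : ℕ} (P : Matrix (Fin n) (Fin n) ℝ)
    (h0 : ∀ i j, 0 ≤ P i j) (h1 : ∀ i, ∑ j, P i j = 1) (v : Fin n → ℝ) (i : Fin n) :
    |P.mulVec v i| ≤ ‖v‖ := by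
  have e : P.mulVec v i = ∑ j, P i j * v j := rfl
  rw [e]
  calc |∑ j, P i j * v j| ≤ ∑ j, |P i j * v j| := Finset.abs_sum_le_sum_abs _ _
  _ ≤ ∑ j, P i j * ‖v‖ := Finset.sum_le_sum fun j _ => by
        rw [abs_mul, abs_of_nonneg (h0 i j)]
        exact mul_le_mul_of_nonneg_left ((Real.norm_eq_abs (v j)) ▸ norm_le_pi_norm v j) (h0 i j)
  _ = ‖v‖ := by rw [← Finset.sum_mul, h1 i, one_mul]

private lemma stoch_mulVec_norm_le {n : ℕ} (P : Matrix (Fin n) (Fin n) ℝ)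
    (h0 : ∀ i j, 0 ≤ P i j) (h1 : ∀ i, ∑ j, P i j = 1) (v : Fin n → ℝ) :
    ‖P.mulVec v‖ ≤ ‖v‖ := by
  rw [pi_norm_le_iff_of_nonneg (norm_nonneg v)]
  intro i
  simpa [Real.norm_eq_abs] using stoch_mulVec_abs_le P h0 h1 v i

private lemma stoch_isUnit_det {n : ℕ} (P : Matrix (Fin n) (Fin n) ℝ)
    (h0 : ∀ i j, 0 ≤ P i j) (h1 : ∀ i, ∑ j, P i j = 1)
    {γ : ℝ} (hγ0 : 0 ≤ γ) (hγ1 : γ < 1) : IsUnit (1 - γ • P).det := by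
  rw [isUnit_iff_ne_zero]
  intro hdet
  obtain ⟨v, hv0, hv⟩ := Matrix.exists_mulVec_eq_zero_iff.mpr hdet
  have hveq : v = γ • P.mulVec v := by
    have := hv
    rw [Matrix.sub_mulVec, Matrix.one_mulVec, Matrix.smul_mulVec, sub_eq_zero] at this
    exact this
  have h1' : ‖v‖ ≤ γ * ‖v‖ := by
    calc ‖v‖ = ‖γ • P.mulVec v‖ := by rw [← hveq]
    _ = γ * ‖P.mulVec v‖ := by rw [norm_smul, Real.norm_eq_abs, abs_of_nonneg hγ0]
    _ ≤ γ * ‖v‖ := mul_le_mul_of_nonneg_left (stoch_mulVec_norm_le P h0 h1 v) hγ0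
  have hvpos : 0 < ‖v‖ := norm_pos_iff.mpr hv0
  nlinarith

theorem stmt_5 (n : ℕ) (P₁ P₂ : Matrix (Fin n) (Fin n) ℝ)
    (hP₁0 : ∀ i j, 0 ≤ P₁ i j) (hP₁1 : ∀ i, ∑ j, P₁ i j = 1)
    (hP₂0 : ∀ i j, 0 ≤ P₂ i j) (hP₂1 : ∀ i, ∑ j, P₂ i j = 1)
    (γ : ℝ) (hγ0 : 0 ≤ γ) (hγ1 : γ < 1) (R : Fin n → ℝ)
    (V₁ V₂ : Fin n → ℝ)
    (hV₁ : V₁ = ((1 - γ • P₁)⁻¹).mulVec R)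
    (hV₂ : V₂ = ((1 - γ • P₂)⁻¹).mulVec R) :
    ‖V₁ - V₂‖ ≤ γ / (1 - γ) ^ 2 * ‖R‖ * (⨆ i, ∑ j, |(P₁ - P₂) i j|) := by
  rcases Nat.eq_zero_or_pos n with hn | hn
  · subst hn
    have : V₁ - V₂ = 0 := Subsingleton.elim _ _
    rw [this, norm_zero, Real.iSup_of_isEmpty]
    simp
  have : Nonempty (Fin n) := ⟨⟨0, hn⟩⟩
  -- fixed point equations
  have key : ∀ (P : Matrix (Fin n) (Fin n) ℝ), (∀ i j, 0 ≤ P i j) → (∀ i, ∑ j, P i j = 1) →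
      ∀ V : Fin n → ℝ, V = ((1 - γ • P)⁻¹).mulVec R → V = R + γ • P.mulVec V := by
    intro P h0 h1 V hV
    have hu := stoch_isUnit_det P h0 h1 hγ0 hγ1
    have : (1 - γ • P).mulVec V = R := by
      rw [hV, Matrix.mulVec_mulVec, Matrix.mul_nonsing_inv _ hu, Matrix.one_mulVec]
    rw [Matrix.sub_mulVec, Matrix.one_mulVec, Matrix.smul_mulVec, sub_eq_iff_eq_add] at this
    linear_combination (norm := abel) this
  have h₁ := key P₁ hP₁0 hP₁1 V₁ hV₁
  have h₂ := key P₂ hP₂0 hP₂1 V₂ hV₂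
  set K : ℝ := ⨆ i, ∑ j, |(P₁ - P₂) i j| with hK
  have hbdd : BddAbove (Set.range fun i => ∑ j, |(P₁ - P₂) i j|) := Set.finite_range _ |>.bddAbove
  have hKle : ∀ i, ∑ j, |(P₁ - P₂) i j| ≤ K := fun i => le_ciSup hbdd i
  have hK0 : 0 ≤ K := le_trans (Finset.sum_nonneg fun j _ => abs_nonneg _) (hKle (Classical.arbitrary _))
  -- ‖V₂‖ ≤ ‖R‖ / (1 - γ)
  have hV2 : (1 - γ) * ‖V₂‖ ≤ ‖R‖ := by
    have : ‖V₂‖ ≤ ‖R‖ + γ * ‖V₂‖ := by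
      calc ‖V₂‖ = ‖R + γ • P₂.mulVec V₂‖ := by rw [← h₂]
      _ ≤ ‖R‖ + ‖γ • P₂.mulVec V₂‖ := norm_add_le _ _
      _ ≤ ‖R‖ + γ * ‖V₂‖ := by
          rw [norm_smul, Real.norm_eq_abs, abs_of_nonneg hγ0]
          exact add_le_add_right (mul_le_mul_of_nonneg_left
            (stoch_mulVec_norm_le P₂ hP₂0 hP₂1 V₂) hγ0) _
    linarith
  -- ‖(P₁ - P₂).mulVec V₂‖ ≤ K * ‖V₂‖
  have hΔ : ‖(P₁ - P₂).mulVec V₂‖ ≤ K * ‖V₂‖ := by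
    rw [pi_norm_le_iff_of_nonneg (mul_nonneg hK0 (norm_nonneg _))]
    intro i
    rw [Real.norm_eq_abs]
    have e : (P₁ - P₂).mulVec V₂ i = ∑ j, (P₁ - P₂) i j * V₂ j := rfl
    rw [e]
    calc |∑ j, (P₁ - P₂) i j * V₂ j| ≤ ∑ j, |(P₁ - P₂) i j * V₂ j| :=
          Finset.abs_sum_le_sum_abs _ _
    _ ≤ ∑ j, |(P₁ - P₂) i j| * ‖V₂‖ := Finset.sum_le_sum fun j _ => by
          rw [abs_mul]
          exact mul_le_mul_of_nonneg_left ((Real.norm_eq_abs (V₂ j)) ▸ norm_le_pi_norm V₂ j)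
            (abs_nonneg _)
    _ = (∑ j, |(P₁ - P₂) i j|) * ‖V₂‖ := by rw [Finset.sum_mul]
    _ ≤ K * ‖V₂‖ := mul_le_mul_of_nonneg_right (hKle i) (norm_nonneg _)
  -- main recursion
  have hD : V₁ - V₂ = γ • P₁.mulVec (V₁ - V₂) + γ • (P₁ - P₂).mulVec V₂ := by
    have e : V₁ - V₂ = (R + γ • P₁.mulVec V₁) - (R + γ • P₂.mulVec V₂) := by
      rw [← h₁, ← h₂]
    rw [Matrix.sub_mulVec, Matrix.mulVec_sub]
    conv_lhs => rw [e]
    module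
  have hDn : ‖V₁ - V₂‖ ≤ γ * ‖V₁ - V₂‖ + γ * (K * ‖V₂‖) := by
    calc ‖V₁ - V₂‖ = ‖γ • P₁.mulVec (V₁ - V₂) + γ • (P₁ - P₂).mulVec V₂‖ := by rw [← hD]
    _ ≤ ‖γ • P₁.mulVec (V₁ - V₂)‖ + ‖γ • (P₁ - P₂).mulVec V₂‖ := norm_add_le _ _
    _ ≤ γ * ‖V₁ - V₂‖ + γ * (K * ‖V₂‖) := by
        rw [norm_smul, norm_smul, Real.norm_eq_abs, abs_of_nonneg hγ0]
        exact add_le_add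
          (mul_le_mul_of_nonneg_left (stoch_mulVec_norm_le P₁ hP₁0 hP₁1 _) hγ0)
          (mul_le_mul_of_nonneg_left hΔ hγ0)
  have h1γ : 0 < 1 - γ := by linarith
  have hfin : ‖V₁ - V₂‖ * (1 - γ) ^ 2 ≤ γ * ‖R‖ * K := by
    nlinarith [mul_le_mul_of_nonneg_left hV2 (mul_nonneg hγ0 hK0),
      mul_le_mul_of_nonneg_left hDn h1γ.le, norm_nonneg (V₁ - V₂), norm_nonneg V₂]
  rw [div_mul_eq_mul_div, div_mul_eq_mul_div, le_div_iff₀ (pow_pos h1γ 2)]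
  linarith
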